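/- Fix an integer N ≥ 1 and real numbers μ_i[0] > 0 for 0 ≤ i ≤ N−1, and let the sequences μ_i : ℕ → (0,∞) be determined by the recursion μ_i[n+1] = μ_i[n]·exp( 2·Σ_{j=0}^{i−1} μ_j[n+1] ). Then for every 0 ≤ j ≤ N−1 and every n ∈ ℕ: μ_j[n] ≥ μ_j[0]·exp( 2n·Σ_{k=0}^{j−1} μ_k[0] ). -/
import Mathlib


/-- The recursive system modelling the energy exchange between `N` spherically symmetric
Vlasov beams: `μ_i[n+1] = μ_i[n]·exp(2·Σ_{j=0}^{i−1} μ_j[n+1])` for `0 ≤ i ≤ N−1`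
(the empty sum being `0` for `i = 0`). -/
def MuRec (N : ℕ) (μ : ℕ → ℕ → ℝ) : Prop :=
  ∀ i < N, ∀ n : ℕ,
    μ i (n + 1) = μ i n * Real.exp (2 * ∑ j ∈ Finset.range i, μ j (n + 1))

/-- **Exponential lower bound for the beam-interaction recursion.**
`μ_j[n] ≥ μ_j[0]·exp(2n·Σ_{k=0}^{j−1} μ_k[0])`. -/
theorem mu_system_exponential_lower_bound (N : ℕ) (hN : 1 ≤ N) (μ : ℕ → ℕ → ℝ)
    (hpos : ∀ i < N, ∀ n : ℕ, 0 < μ i n) (hμ0 : ∀ i < N, 0 < μ i 0)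
    (hrec : MuRec N μ) :
    ∀ j < N, ∀ n : ℕ,
      μ j 0 * Real.exp (2 * n * ∑ k ∈ Finset.range j, μ k 0) ≤ μ j n := by
  -- monotonicity: μ i 0 ≤ μ i n
  have hmono : ∀ i < N, ∀ n : ℕ, μ i 0 ≤ μ i n := by
    intro i hi n
    induction n with
    | zero => exact le_refl _
    | succ n ih =>
      rw [hrec i hi n]
      have hsum : 0 ≤ 2 * ∑ j ∈ Finset.range i, μ j (n + 1) := by
        have : 0 ≤ ∑ j ∈ Finset.range i, μ j (n + 1) :=
          Finset.sum_nonneg fun j hj =>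
            (hpos j (lt_of_lt_of_le (Finset.mem_range.mp hj) hi.le) (n + 1)).le
        linarith
      calc μ i 0 ≤ μ i n := ih
        _ = μ i n * 1 := (mul_one _).symm
        _ ≤ μ i n * Real.exp (2 * ∑ j ∈ Finset.range i, μ j (n + 1)) := by
            exact mul_le_mul_of_nonneg_left (Real.one_le_exp hsum) (hpos i hi n).le
  intro j hj n
  induction n with
  | zero => simp
  | succ n ih =>
    have hS : ∑ k ∈ Finset.range j, μ k 0 ≤ ∑ k ∈ Finset.range j, μ k (n + 1) :=
      Finset.sum_le_sum fun k hk =>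
        hmono k (lt_of_lt_of_le (Finset.mem_range.mp hk) hj.le) (n + 1)
    rw [hrec j hj n]
    have h1 : Real.exp (2 * ↑(n + 1) * ∑ k ∈ Finset.range j, μ k 0)
        = Real.exp (2 * ↑n * ∑ k ∈ Finset.range j, μ k 0) *
          Real.exp (2 * ∑ k ∈ Finset.range j, μ k 0) := by
      rw [← Real.exp_add]; push_cast; ring_nf
    rw [h1, ← mul_assoc]
    apply mul_le_mul ih (Real.exp_le_exp.mpr (by linarith)) (Real.exp_pos _).le
      (le_of_lt (hpos j hj n))
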